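/- Let Q_ψ(y_1,...,y_n) = -2cos(ψ)·∑_{i=1}^n y_i² + 2∑_{i=1}^{n-1} y_i y_{i+1} with ψ = 2πk/(n+1) for an integer 1 ≤ k ≤ (n+1)/2. Then the number of negative eigenvalues (the index) of Q_ψ equals n - 2k if 2k ≤ n, and equals 0 if n is odd and k = (n+1)/2. -/

import Mathlib

open Real

namespace IndexQPsiAux

open Polynomial Matrix

lemma eval_charpoly' {n : ℕ} (M : Matrix (Fin n) (Fin n) ℝ) (x : ℝ) :
    M.charpoly.eval x = (x • (1 : Matrix (Fin n) (Fin n) ℝ) - M).det := by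
  rw [Matrix.charpoly, ← Polynomial.coe_evalRingHom, RingHom.map_det]
  congr 1
  ext i j
  simp only [RingHom.mapMatrix_apply, Matrix.map_apply, charmatrix_apply, coe_evalRingHom,
    Matrix.sub_apply, Matrix.diagonal_apply, Matrix.smul_apply, Matrix.one_apply]
  by_cases h : i = j <;> simp [h]

lemma det_smul_one_sub {n : ℕ} {Q : Matrix (Fin n) (Fin n) ℝ} (hQ : Q.IsHermitian) (x : ℝ) :
    (x • (1 : Matrix (Fin n) (Fin n) ℝ) - Q).det = ∏ i, (x - hQ.eigenvalues i) := by
  set U : Matrix (Fin n) (Fin n) ℝ := (hQ.eigenvectorUnitary : Matrix (Fin n) (Fin n) ℝ) with hU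
  have hU1 : U * star U = 1 := hQ.eigenvectorUnitary.2.2
  have hQeq : Q = U * Matrix.diagonal (RCLike.ofReal ∘ hQ.eigenvalues) * star U :=
    hQ.spectral_theorem
  have key : x • (1 : Matrix (Fin n) (Fin n) ℝ) - Q
      = U * (x • (1 : Matrix (Fin n) (Fin n) ℝ)
          - Matrix.diagonal (RCLike.ofReal ∘ hQ.eigenvalues)) * star U := by
    rw [Matrix.mul_sub, Matrix.sub_mul]
    conv_lhs => rw [hQeq]
    congr 1
    rw [Matrix.mul_smul, Matrix.smul_mul, Matrix.mul_one, hU1]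
  rw [key, Matrix.det_mul, Matrix.det_mul]
  have hdetU : U.det * (star U).det = 1 := by
    rw [← Matrix.det_mul, hU1, Matrix.det_one]
  have hre : U.det * ((x • (1 : Matrix (Fin n) (Fin n) ℝ)
        - Matrix.diagonal (RCLike.ofReal ∘ hQ.eigenvalues)).det) * (star U).det
      = (x • (1 : Matrix (Fin n) (Fin n) ℝ)
        - Matrix.diagonal (RCLike.ofReal ∘ hQ.eigenvalues)).det * (U.det * (star U).det) := by ring
  rw [hre, hdetU, mul_one]
  have hdiag : x • (1 : Matrix (Fin n) (Fin n) ℝ)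
        - Matrix.diagonal (RCLike.ofReal ∘ hQ.eigenvalues)
      = Matrix.diagonal (fun i => x - hQ.eigenvalues i) := by
    ext i j
    by_cases h : i = j <;> simp [h, Matrix.one_apply, Matrix.diagonal_apply]
  rw [hdiag, Matrix.det_diagonal]

lemma eig_multiset {n : ℕ} {Q : Matrix (Fin n) (Fin n) ℝ} (hQ : Q.IsHermitian)
    (lam : Fin n → ℝ) (hinj : Function.Injective lam)
    (v : Fin n → Fin n → ℝ) (hv : ∀ s, v s ≠ 0)
    (heig : ∀ s, Q *ᵥ v s = lam s • v s) :
    Finset.univ.val.map hQ.eigenvalues = Finset.univ.val.map lam := by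
  have hcp : Q.charpoly = ∏ i, (X - C (hQ.eigenvalues i)) := by
    apply Polynomial.funext
    intro x
    rw [eval_charpoly', det_smul_one_sub hQ]
    simp [eval_prod]
  have hroots : Q.charpoly.roots = Finset.univ.val.map hQ.eigenvalues := by
    rw [hcp]
    have : ∏ i : Fin n, (X - C (hQ.eigenvalues i))
        = ((Finset.univ.val.map hQ.eigenvalues).map fun a => X - C a).prod := by
      rw [Multiset.map_map]; rfl
    rw [this, Polynomial.roots_multiset_prod_X_sub_C]
  have hroot : ∀ s, lam s ∈ Q.charpoly.roots := by
    intro s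
    rw [Polynomial.mem_roots (Matrix.charpoly_monic Q).ne_zero]
    · show Q.charpoly.eval (lam s) = 0
      rw [eval_charpoly']
      rw [← Matrix.exists_mulVec_eq_zero_iff]
      refine ⟨v s, hv s, ?_⟩
      rw [Matrix.sub_mulVec, Matrix.smul_mulVec, Matrix.one_mulVec, heig s, sub_self]
  have hnodup : (Finset.univ.val.map lam).Nodup :=
    Finset.univ.nodup.map hinj
  have hle : Finset.univ.val.map lam ≤ Q.charpoly.roots := by
    rw [Multiset.le_iff_subset hnodup]
    intro x hx
    obtain ⟨s, _, rfl⟩ := Multiset.mem_map.mp hx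
    exact hroot s
  have heq : Finset.univ.val.map lam = Q.charpoly.roots :=
    Multiset.eq_of_le_of_card_le hle (by simp [hroots])
  rw [← hroots, ← heq]

lemma sin_ladder (x y : ℝ) :
    Real.sin (x - y) + Real.sin (x + y) = 2 * Real.cos y * Real.sin x := by
  rw [Real.sin_sub, Real.sin_add]; ring

lemma eig_eq {n k : ℕ} (Q : Matrix (Fin n) (Fin n) ℝ)
    (hQdef : ∀ i j : Fin n, Q i j =
      if i = j then -2 * Real.cos (2 * π * k / (n + 1))
      else if ((i : ℤ) - (j : ℤ)).natAbs = 1 then 1 else 0)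
    (s : Fin n) :
    Q *ᵥ (fun i : Fin n => Real.sin ((((s:ℕ):ℝ)+1) * (((i:ℕ):ℝ)+1) * π / ((n:ℝ)+1)))
      = (2 * (Real.cos ((((s:ℕ):ℝ)+1) * π / ((n:ℝ)+1)) - Real.cos (2 * π * k / (n + 1))))
        • (fun i : Fin n => Real.sin ((((s:ℕ):ℝ)+1) * (((i:ℕ):ℝ)+1) * π / ((n:ℝ)+1))) := by
  have hN : ((n:ℝ)+1) ≠ 0 := by positivity
  set a : ℝ := ((s:ℕ):ℝ)+1 with ha
  set c : ℝ := -2 * Real.cos (2 * π * k / (n + 1)) with hc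
  set W : ℕ → ℝ := fun m => Real.sin (a * (m:ℝ) * π / ((n:ℝ)+1)) with hW
  have hW0 : W 0 = 0 := by simp [hW]
  have hWn : W (n+1) = 0 := by
    simp only [hW]
    push_cast
    rw [show a * ((n:ℝ)+1) * π / ((n:ℝ)+1) = (((s:ℕ)+1 : ℕ):ℝ) * π by
      rw [ha]; push_cast; field_simp]
    exact Real.sin_nat_mul_pi _
  have hladder : ∀ m : ℕ, W m + W (m+2) = 2 * Real.cos (a * π / ((n:ℝ)+1)) * W (m+1) := by
    intro m
    have := sin_ladder (a * ((m:ℝ)+1) * π / ((n:ℝ)+1)) (a * π / ((n:ℝ)+1))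
    simp only [hW]
    push_cast
    rw [show a * (m:ℝ) * π / ((n:ℝ)+1) = a * ((m:ℝ)+1) * π / ((n:ℝ)+1) - a * π / ((n:ℝ)+1) by ring,
        show a * ((m:ℝ)+2) * π / ((n:ℝ)+1) = a * ((m:ℝ)+1) * π / ((n:ℝ)+1) + a * π / ((n:ℝ)+1) by ring]
    exact this
  have hV : (fun i : Fin n => Real.sin ((((s:ℕ):ℝ)+1) * (((i:ℕ):ℝ)+1) * π / ((n:ℝ)+1)))
      = fun i : Fin n => W ((i:ℕ)+1) := by
    funext i; simp only [hW, ha]; push_cast; ring_nf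
  rw [hV]
  funext i
  simp only [Matrix.mulVec, dotProduct, Pi.smul_apply, smul_eq_mul]
  have step1 : ∀ j : Fin n, Q i j * W ((j:ℕ)+1)
      = (if j = i then c * W ((j:ℕ)+1) else 0)
        + ((if (j:ℕ) = (i:ℕ)+1 then W ((j:ℕ)+1) else 0)
        + (if (j:ℕ)+1 = (i:ℕ) then W ((j:ℕ)+1) else 0)) := by
    intro j
    rw [hQdef i j]
    by_cases h1 : i = j
    · subst h1
      simp [hc]
    · have h1' : ¬ (j = i) := fun h => h1 h.symm
      by_cases h2 : ((i : ℤ) - (j : ℤ)).natAbs = 1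
      · have h3 : (j:ℕ) = (i:ℕ)+1 ∨ (j:ℕ)+1 = (i:ℕ) := by omega
        rcases h3 with h3 | h3
        · have h4 : ¬ ((i:ℕ)+1+1 = (i:ℕ)) := by omega
          simp [h1, h1', h2, h3, h4]
        · have h4 : ¬ ((j:ℕ) = (i:ℕ)+1) := by omega
          simp [h1, h1', h2, h3, h4]
      · have h3 : ¬ ((j:ℕ) = (i:ℕ)+1) := by omega
        have h4 : ¬ ((j:ℕ)+1 = (i:ℕ)) := by omega
        simp [h1, h1', h2, h3, h4]
  rw [Finset.sum_congr rfl (fun j _ => step1 j), Finset.sum_add_distrib, Finset.sum_add_distrib,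
    Finset.sum_ite_eq' Finset.univ i (fun j => c * W ((j:ℕ)+1))]
  have hT1 : (∑ j : Fin n, if (j:ℕ) = (i:ℕ)+1 then W ((j:ℕ)+1) else 0) = W ((i:ℕ)+2) := by
    by_cases h : (i:ℕ)+1 < n
    · have : ∀ j : Fin n, ((j:ℕ) = (i:ℕ)+1) ↔ j = ⟨(i:ℕ)+1, h⟩ := by
        intro j; rw [Fin.ext_iff]
      simp_rw [this]
      rw [Finset.sum_ite_eq' Finset.univ (⟨(i:ℕ)+1, h⟩ : Fin n) (fun j => W ((j:ℕ)+1))]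
      simp
    · have hi : (i:ℕ)+1 = n := by omega
      rw [Finset.sum_eq_zero (fun j _ => by
        have : ¬ ((j:ℕ) = (i:ℕ)+1) := by omega
        simp [this])]
      rw [show (i:ℕ)+2 = n+1 by omega, hWn]
  have hT2 : (∑ j : Fin n, if (j:ℕ)+1 = (i:ℕ) then W ((j:ℕ)+1) else 0) = W (i:ℕ) := by
    by_cases h : 0 < (i:ℕ)
    · have h' : (i:ℕ)-1 < n := by omega
      have : ∀ j : Fin n, ((j:ℕ)+1 = (i:ℕ)) ↔ j = ⟨(i:ℕ)-1, h'⟩ := by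
        intro j; rw [Fin.ext_iff]; simp; omega
      simp_rw [this]
      rw [Finset.sum_ite_eq' Finset.univ (⟨(i:ℕ)-1, h'⟩ : Fin n) (fun j => W ((j:ℕ)+1))]
      simp only [Finset.mem_univ, if_true]
      congr 1
      omega
    · have hi : (i:ℕ) = 0 := by omega
      rw [Finset.sum_eq_zero (fun j _ => by
        have : ¬ ((j:ℕ)+1 = (i:ℕ)) := by omega
        simp [this])]
      rw [hi, hW0]
  rw [hT1, hT2]
  simp only [Finset.mem_univ, if_true]
  have hl := hladder (i:ℕ)
  have hfin : c * W ((i:ℕ)+1) + (W ((i:ℕ)+2) + W (i:ℕ))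
      = 2 * (Real.cos ((((s:ℕ):ℝ)+1) * π / ((n:ℝ)+1)) - Real.cos (2 * π * k / (n + 1)))
        * W ((i:ℕ)+1) := by
    rw [show c * W ((i:ℕ)+1) + (W ((i:ℕ)+2) + W (i:ℕ))
        = (W (i:ℕ) + W ((i:ℕ)+2)) + c * W ((i:ℕ)+1) by ring, hl, hc, ← ha]
    ring
  rw [hfin]

lemma count_filter_fin (n k : ℕ) :
    (Finset.univ.filter fun s : Fin n => 2*k < (s:ℕ)+1).card = n - 2*k := by
  rw [show n - 2*k = ((Finset.range n).filter fun m => 2*k < m+1).card by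
    have : (Finset.range n).filter (fun m => 2*k < m+1) = Finset.Ico (2*k) n := by
      ext m
      simp [Finset.mem_Ico, Finset.mem_range]
      omega
    rw [this, Nat.card_Ico]]
  apply Finset.card_bij (fun (s : Fin n) _ => (s:ℕ))
  · intro s hs
    simp only [Finset.mem_filter, Finset.mem_range]
    simp only [Finset.mem_filter] at hs
    exact ⟨s.isLt, hs.2⟩
  · intro s _ t _ h
    exact Fin.ext h
  · intro m hm
    simp only [Finset.mem_filter, Finset.mem_range] at hm
    exact ⟨⟨m, hm.1⟩, by simp; omega, rfl⟩

lemma lam_neg_iff {n k : ℕ} (hk2 : 2 * k ≤ n + 1) (s : Fin n) :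
    2 * (Real.cos ((((s:ℕ):ℝ)+1) * π / ((n:ℝ)+1)) - Real.cos (2 * π * k / (n + 1))) < 0
      ↔ 2*k < (s:ℕ)+1 := by
  have hNpos : (0:ℝ) < (n:ℝ)+1 := by positivity
  have hpi := Real.pi_pos
  have hmemA : (((s:ℕ):ℝ)+1) * π / ((n:ℝ)+1) ∈ Set.Icc 0 π := by
    constructor
    · positivity
    · rw [div_le_iff₀ hNpos]
      have h1 : ((s:ℕ):ℝ)+1 ≤ (n:ℝ)+1 := by
        have := s.isLt
        have : ((s:ℕ):ℝ) ≤ (n:ℝ) := by exact_mod_cast this.le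
        linarith
      nlinarith
  have hmemB : (2*π*(k:ℝ)) / ((n:ℝ)+1) ∈ Set.Icc 0 π := by
    constructor
    · positivity
    · rw [div_le_iff₀ hNpos]
      have h1 : ((2*k : ℕ):ℝ) ≤ (n:ℝ)+1 := by exact_mod_cast hk2
      push_cast at h1
      nlinarith
  constructor
  · intro h
    have hlt : Real.cos ((((s:ℕ):ℝ)+1) * π / ((n:ℝ)+1)) < Real.cos (2 * π * (k:ℝ) / ((n:ℝ)+1)) := by
      linarith
    have := (Real.strictAntiOn_cos.lt_iff_gt hmemA hmemB).mp ?_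
    · rw [div_lt_div_iff_of_pos_right hNpos] at this
      have h2 : (2*(k:ℝ)) * π < (((s:ℕ):ℝ)+1) * π := by nlinarith
      have h3 : (2*(k:ℝ)) < ((s:ℕ):ℝ)+1 := by nlinarith
      exact_mod_cast (by push_cast; linarith : ((2*k:ℕ):ℝ) < (((s:ℕ)+1 : ℕ):ℝ))
    · exact hlt
  · intro h
    have h3 : (2*(k:ℝ)) < ((s:ℕ):ℝ)+1 := by
      have : ((2*k:ℕ):ℝ) < (((s:ℕ)+1 : ℕ):ℝ) := by exact_mod_cast h
      push_cast at this; linarith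
    have hlt : 2 * π * (k:ℝ) / ((n:ℝ)+1) < (((s:ℕ):ℝ)+1) * π / ((n:ℝ)+1) := by
      rw [div_lt_div_iff_of_pos_right hNpos]
      nlinarith
    have := Real.strictAntiOn_cos hmemB hmemA hlt
    linarith

lemma lam_inj {n k : ℕ} :
    Function.Injective (fun s : Fin n =>
      2 * (Real.cos ((((s:ℕ):ℝ)+1) * π / ((n:ℝ)+1)) - Real.cos (2 * π * k / (n + 1)))) := by
  have hNpos : (0:ℝ) < (n:ℝ)+1 := by positivity
  have hpi := Real.pi_pos
  intro s t h
  simp only at h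
  have hcos : Real.cos ((((s:ℕ):ℝ)+1) * π / ((n:ℝ)+1))
      = Real.cos ((((t:ℕ):ℝ)+1) * π / ((n:ℝ)+1)) := by linarith
  have hmem : ∀ u : Fin n, (((u:ℕ):ℝ)+1) * π / ((n:ℝ)+1) ∈ Set.Icc 0 π := by
    intro u
    constructor
    · positivity
    · rw [div_le_iff₀ hNpos]
      have h1 : ((u:ℕ):ℝ) ≤ (n:ℝ) := by exact_mod_cast u.isLt.le
      nlinarith
  have heq := Real.injOn_cos (hmem s) (hmem t) hcos
  field_simp at heq
  exact Fin.ext (by exact_mod_cast (by linarith : ((s:ℕ):ℝ) = ((t:ℕ):ℝ)))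

end IndexQPsiAux

open IndexQPsiAux Matrix in
theorem index_of_Q_psi (n k : ℕ) (hk1 : 1 ≤ k) (hk2 : 2 * k ≤ n + 1)
    (Q : Matrix (Fin n) (Fin n) ℝ)
    (hQdef : ∀ i j : Fin n, Q i j =
      if i = j then -2 * Real.cos (2 * π * k / (n + 1))
      else if ((i : ℤ) - (j : ℤ)).natAbs = 1 then 1 else 0)
    (hQ : Q.IsHermitian) :
    (2 * k ≤ n →
      (Finset.univ.filter fun s : Fin n => hQ.eigenvalues s < 0).card = n - 2 * k) ∧
    (Odd n → 2 * k = n + 1 →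
      (Finset.univ.filter fun s : Fin n => hQ.eigenvalues s < 0).card = 0) := by
  have hn : 1 ≤ n := by omega
  set lam : Fin n → ℝ := fun s =>
    2 * (Real.cos ((((s:ℕ):ℝ)+1) * π / ((n:ℝ)+1)) - Real.cos (2 * π * k / (n + 1))) with hlam
  set v : Fin n → Fin n → ℝ := fun s i =>
    Real.sin ((((s:ℕ):ℝ)+1) * (((i:ℕ):ℝ)+1) * π / ((n:ℝ)+1)) with hv
  have hNpos : (0:ℝ) < (n:ℝ)+1 := by positivity
  have hpi := Real.pi_pos
  have hvne : ∀ s, v s ≠ 0 := by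
    intro s hzero
    have h00 : (((⟨0, hn⟩ : Fin n) : ℕ):ℝ) = 0 := by norm_num
    have hpos : 0 < v s ⟨0, hn⟩ := by
      rw [hv]
      simp only [h00]
      apply Real.sin_pos_of_pos_of_lt_pi
      · positivity
      · rw [div_lt_iff₀ hNpos]
        have h1 : ((s:ℕ):ℝ) < (n:ℝ) := by exact_mod_cast s.isLt
        nlinarith
    rw [hzero] at hpos
    exact lt_irrefl 0 (by simpa using hpos)
  have heig : ∀ s, Q *ᵥ v s = lam s • v s := fun s => eig_eq Q hQdef s
  have hmult := eig_multiset hQ lam lam_inj v hvne heig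
  have hcount : (Finset.univ.filter fun s : Fin n => hQ.eigenvalues s < 0).card
      = (Finset.univ.filter fun s : Fin n => lam s < 0).card := by
    have h1 : ((Finset.univ.val.map hQ.eigenvalues).countP (fun x : ℝ => x < 0))
        = ((Finset.univ.val.map lam).countP (fun x : ℝ => x < 0)) := by rw [hmult]
    rwa [Multiset.countP_map, Multiset.countP_map] at h1
  have hfilter : (Finset.univ.filter fun s : Fin n => lam s < 0)
      = (Finset.univ.filter fun s : Fin n => 2*k < (s:ℕ)+1) := by
    apply Finset.filter_congr
    intro s _
    exact lam_neg_iff hk2 s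
  have hmain : (Finset.univ.filter fun s : Fin n => hQ.eigenvalues s < 0).card = n - 2*k := by
    rw [hcount, hfilter, count_filter_fin]
  constructor
  · intro _; exact hmain
  · intro _ h2k
    rw [hmain]
    omega
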